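/- Let g be a Lorentzian 3×3 real symmetric matrix, g8 a positive-definite 8×8 real symmetric matrix, c ∈ ℝ with c² > |g|, A ≠ 0, and set D := A²·(c² − |g|) (which is positive). Then U_B(A)ᵀ · M_C(g, g8, c) · U_B(A) = M_C( D^(−2/3)·g, D^(1/3)·g8, −c/D ). These are the timelike Buscher rules, valid exactly when the dualised background can still be described by a metric and 3-form. -/

import Mathlib

open Matrix

/-- The (g,C)-frame generalised metric: a 14×14 matrix in 3+3+8 block form. -/
noncomputable def MC (g : Matrix (Fin 3) (Fin 3) ℝ) (g8 : Matrix (Fin 8) (Fin 8) ℝ) (c : ℝ) :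
    Matrix ((Fin 3 ⊕ Fin 3) ⊕ Fin 8) ((Fin 3 ⊕ Fin 3) ⊕ Fin 8) ℝ :=
  |g.det * g8.det| ^ (-(1 : ℝ) / 2) •
    fromBlocks
      (fromBlocks ((1 + c ^ 2 / g.det) • g) ((c / g.det) • g) ((c / g.det) • g)
        ((1 / g.det) • g))
      0 0 g8

/-- The Buscher duality matrix: [[0, A·1], [−(1/A)·1, 0]] on the first 6 coordinates,
identity on the 8 transverse coordinates. -/
noncomputable def UB (A : ℝ) : Matrix ((Fin 3 ⊕ Fin 3) ⊕ Fin 8) ((Fin 3 ⊕ Fin 3) ⊕ Fin 8) ℝ :=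
  fromBlocks (fromBlocks 0 (A • 1) ((-(1 / A)) • 1) 0) 0 0 1

/-- A 3×3 real symmetric (Hermitian) matrix is Lorentzian if it has exactly one negative
and two positive eigenvalues. -/
def Lorentzian3 (g : Matrix (Fin 3) (Fin 3) ℝ) : Prop :=
  ∃ hg : g.IsHermitian,
    {i | hg.eigenvalues i < 0}.ncard = 1 ∧ {i | 0 < hg.eigenvalues i}.ncard = 2

lemma det_neg_of_lorentzian {g : Matrix (Fin 3) (Fin 3) ℝ} (hg : Lorentzian3 g) : g.det < 0 := by
  obtain ⟨hgh, h1, h2⟩ := hg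
  obtain ⟨a, ha⟩ := Set.ncard_eq_one.mp h1
  have hprod : g.det = ∏ i, hgh.eigenvalues i := by
    simpa using hgh.det_eq_prod_eigenvalues
  have hdisj : Disjoint {i | hgh.eigenvalues i < 0} {i | 0 < hgh.eigenvalues i} := by
    rw [Set.disjoint_left]
    intro i hi1 hi2
    exact lt_asymm (Set.mem_setOf.mp hi1) (Set.mem_setOf.mp hi2)
  have huniv : {i | hgh.eigenvalues i < 0} ∪ {i | 0 < hgh.eigenvalues i} = Set.univ := by
    apply Set.eq_of_subset_of_ncard_le (Set.subset_univ _)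
    · rw [Set.ncard_union_eq (s := {i | hgh.eigenvalues i < 0})
        (t := {i | 0 < hgh.eigenvalues i})
        hdisj
        (Set.toFinite _) (Set.toFinite _), h1, h2]
      simp [Set.ncard_univ]
  have ha' : hgh.eigenvalues a < 0 := by
    have : a ∈ {i | hgh.eigenvalues i < 0} := by rw [ha]; exact rfl
    exact this
  have hpos : ∀ i ∈ Finset.univ.erase a, 0 < hgh.eigenvalues i := by
    intro i hi
    have hia : i ≠ a := (Finset.mem_erase.mp hi).1
    have : i ∈ {i | hgh.eigenvalues i < 0} ∪ {i | 0 < hgh.eigenvalues i} := by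
      rw [huniv]; trivial
    rcases this with h | h
    · rw [ha] at h; exact absurd h hia
    · exact h
  rw [hprod, ← Finset.mul_prod_erase _ _ (Finset.mem_univ a)]
  exact mul_neg_of_neg_of_pos ha' (Finset.prod_pos hpos)

lemma sc {x y : ℝ} {m n : Type*} (M : Matrix m n ℝ) (h : x = y) : x • M = y • M := by rw [h]

/-- Timelike Buscher rules: for Lorentzian g, positive-definite g8, c² > |g| (|g| = −det g),
A ≠ 0 and D := A²·(c² − |g|),
U_B(A)ᵀ·M_C(g,g8,c)·U_B(A) = M_C(D^(−2/3)·g, D^(1/3)·g8, −c/D). -/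
theorem stmt_15 (g : Matrix (Fin 3) (Fin 3) ℝ) (g8 : Matrix (Fin 8) (Fin 8) ℝ)
    (hg : Lorentzian3 g) (hg8 : g8.PosDef) (c A : ℝ)
    (hc : -g.det < c ^ 2) (hA : A ≠ 0) :
    (UB A)ᵀ * MC g g8 c * UB A =
      MC ((A ^ 2 * (c ^ 2 - (-g.det))) ^ (-(2 : ℝ) / 3) • g)
        ((A ^ 2 * (c ^ 2 - (-g.det))) ^ ((1 : ℝ) / 3) • g8)
        (-c / (A ^ 2 * (c ^ 2 - (-g.det)))) := by
  have hd : g.det < 0 := det_neg_of_lorentzian hg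
  set D : ℝ := A ^ 2 * (c ^ 2 - -g.det) with hDdef
  have hD : 0 < D := mul_pos (by positivity) (by linarith)
  have hDne : D ≠ 0 := ne_of_gt hD
  have hdne : g.det ≠ 0 := ne_of_lt hd
  have hdet3 : (D ^ (-(2:ℝ)/3) • g).det = D ^ (-(2:ℝ)) * g.det := by
    have h3 : (D ^ (-(2:ℝ)/3)) ^ (3:ℕ) = D ^ (-(2:ℝ)) := by
      rw [← Real.rpow_natCast (D ^ (-(2:ℝ)/3)) 3, ← Real.rpow_mul hD.le]; norm_num
    simp only [Matrix.det_smul_of_tower, Fintype.card_fin, smul_eq_mul, h3]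
  have hdet8 : (D ^ ((1:ℝ)/3) • g8).det = D ^ ((8:ℝ)/3) * g8.det := by
    have h8 : (D ^ ((1:ℝ)/3)) ^ (8:ℕ) = D ^ ((8:ℝ)/3) := by
      rw [← Real.rpow_natCast (D ^ ((1:ℝ)/3)) 8, ← Real.rpow_mul hD.le]; norm_num
    simp only [Matrix.det_smul_of_tower, Fintype.card_fin, smul_eq_mul, h8]
  rw [MC, MC, UB, hdet3, hdet8]
  simp only [transpose_smul, fromBlocks_transpose, transpose_zero, transpose_one, transpose_smul,
    Matrix.mul_smul, Matrix.smul_mul, fromBlocks_multiply, fromBlocks_smul,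
    Matrix.zero_mul, Matrix.mul_zero, Matrix.one_mul, Matrix.mul_one, add_zero, zero_add,
    smul_smul, smul_zero, zero_smul]
  have hDmul : D ^ (-(2:ℝ)) * g.det * (D ^ ((8:ℝ)/3) * g8.det) = D ^ ((2:ℝ)/3) * (g.det * g8.det) := by
    rw [show D ^ ((2:ℝ)/3) = D ^ (-(2:ℝ)) * D ^ ((8:ℝ)/3) by rw [← Real.rpow_add hD]; norm_num]
    ring
  have habs : |D ^ (-(2:ℝ)) * g.det * (D ^ ((8:ℝ)/3) * g8.det)| ^ (-(1:ℝ)/2)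
      = D ^ (-(1:ℝ)/3) * |g.det * g8.det| ^ (-(1:ℝ)/2) := by
    rw [hDmul, abs_mul, abs_of_pos (Real.rpow_pos_of_pos hD _),
      Real.mul_rpow (Real.rpow_pos_of_pos hD _).le (abs_nonneg _), ← Real.rpow_mul hD.le]
    norm_num
  set t := D ^ ((1:ℝ)/3) with htdef
  have htpos : 0 < t := Real.rpow_pos_of_pos hD _
  have htne : t ≠ 0 := ne_of_gt htpos
  have ht3 : t ^ 3 = D := by
    rw [htdef, ← Real.rpow_natCast (D ^ ((1:ℝ)/3)) 3, ← Real.rpow_mul hD.le]; norm_num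
  have hrel : t ^ 3 = A ^ 2 * (c ^ 2 - -g.det) := ht3.trans hDdef
  have hx : D ^ (-(1:ℝ)/3) = t⁻¹ := by
    rw [neg_div, Real.rpow_neg hD.le]
  have hb : D ^ (-(2:ℝ)/3) = (t^2)⁻¹ := by
    rw [neg_div, Real.rpow_neg hD.le]
    congr 1
    rw [htdef, show (2:ℝ)/3 = (1/3)*(2:ℕ) by norm_num, Real.rpow_mul hD.le, Real.rpow_natCast]
  have hm2 : D ^ (-(2:ℝ)) = (t^6)⁻¹ := by
    rw [show (-(2:ℝ)) = (1/3)*(-(6:ℝ)) by norm_num, Real.rpow_mul hD.le, ← htdef,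
      show (-(6:ℝ)) = -((6:ℕ):ℝ) by norm_num, Real.rpow_neg htpos.le, Real.rpow_natCast]
  have hsum : c ^ 2 - -g.det ≠ 0 := by intro h; rw [hDdef, h, mul_zero] at hD; exact lt_irrefl 0 hD
  rw [fromBlocks_inj]
  refine ⟨?_, rfl, rfl, ?_⟩
  · rw [habs, fromBlocks_inj, hx, hb, hm2]
    refine ⟨sc _ ?_, sc _ ?_, sc _ ?_, sc _ ?_⟩
    · rw [← ht3]
      generalize |g.det * g8.det| ^ (-(1:ℝ) / 2) = s
      field_simp
      linear_combination s * hrel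
    · rw [← ht3]
      field_simp
    · rw [← ht3]
      field_simp
    · generalize |g.det * g8.det| ^ (-(1:ℝ) / 2) = s
      field_simp
      linear_combination (-s) * hrel
  · rw [habs, hx]
    refine sc _ ?_
    field_simp
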